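/- For all nonnegative integers n, j, the sum Σ_{μ=0}^{n} C(n,μ) (1/(2j)!) Σ_{ν=0}^{2j} (-1)^ν C(2j,ν) (j-ν)^{n+μ} equals {n brace j}_1, i.e., the Legendre-Stirling number admits the double-sum representation (2j)! {n brace j}_1 = Σ_{μ=0}^{n} C(n,μ) Σ_{ν=0}^{2j} (-1)^ν C(2j,ν) (j-ν)^{n+μ}. -/

import Mathlib

open Finset

noncomputable def LS : ℕ → ℕ → ℝ
  | 0, 0 => 1
  | 0, _ + 1 => 0
  | _ + 1, 0 => 0
  | n + 1, j + 1 => LS n j + ((j:ℝ) + 1) * ((j:ℝ) + 2) * LS n (j + 1)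

lemma binom_aux (x : ℝ) (n : ℕ) :
    ∑ μ ∈ range (n+1), (n.choose μ : ℝ) * x ^ (n + μ) = (x * (x+1))^n := by
  rw [mul_pow, add_pow, mul_sum]
  refine sum_congr rfl fun μ hμ => ?_
  rw [pow_add]
  ring

lemma alt_sum (N : ℕ) (hN : N ≠ 0) :
    ∑ ν ∈ range (N+1), (-1:ℝ)^ν * (N.choose ν : ℝ) = 0 := by
  have h := Int.alternating_sum_range_choose (n := N)
  rw [if_neg hN] at h
  have : ((∑ m ∈ range (N + 1), ((-1) ^ m * N.choose m : ℤ) : ℤ) : ℝ) = 0 := by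
    rw [h]; norm_num
  push_cast at this
  convert this using 2

-- coefficient identity in ℕ: C(n,k) * (n-k) = n * C(n-1,k)
lemma choose_mul_sub (n k : ℕ) : n.choose k * (n - k) = n * (n-1).choose k := by
  rcases Nat.lt_or_ge n (k+1) with h | h
  · rcases Nat.eq_or_lt_of_le (Nat.lt_succ_iff.mp h) with rfl | h2
    · cases n with
      | zero => simp
      | succ m => simp [Nat.choose_eq_zero_of_lt (Nat.lt_succ_self m)]
    · rw [Nat.choose_eq_zero_of_lt h2, Nat.choose_eq_zero_of_lt (by omega)]
      simp
  · obtain ⟨m, rfl⟩ : ∃ m, n = m + 1 := ⟨n - 1, by omega⟩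
    have hkm : k ≤ m := by omega
    have h1 : (m+1).choose k = (m+1).choose (m+1-k) := (Nat.choose_symm (by omega)).symm
    have h2 : m + 1 - k = (m - k) + 1 := by omega
    have h3 := Nat.add_one_mul_choose_eq m (m-k)
    rw [Nat.choose_symm hkm] at h3
    rw [h1, h2]
    have h4 : m + 1 - 1 = m := by omega
    rw [h4]
    calc (m+1).choose (m-k+1) * (m-k+1)
        = Nat.succ m * m.choose k := h3.symm
      _ = (m+1) * m.choose k := rfl

lemma coeff_id (m k : ℕ) (hk : k ≤ 2*m+1) :
    ((2*m+2).choose (k+1) : ℝ) * ((k:ℝ)+1) * ((2*(m:ℝ)+2) - k) =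
      (2*(m:ℝ)+2) * ((2*(m:ℝ)+1) * ((2*m).choose k : ℝ) + ((2*m+1).choose k : ℝ)) := by
  have h1 : Nat.succ (2*m+1) * (2*m+1).choose k = (2*m+2).choose (k+1) * (k+1) := by
    have := Nat.add_one_mul_choose_eq (2*m+1) k
    convert this using 2
  have h2 : (2*m+1).choose k * (2*m+1 - k) = (2*m+1) * (2*m).choose k := by
    have := choose_mul_sub (2*m+1) k
    simpa using this
  have h1' : (2*(m:ℝ)+2) * ((2*m+1).choose k : ℝ) = ((2*m+2).choose (k+1) : ℝ) * ((k:ℝ)+1) := by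
    have := congrArg (Nat.cast : ℕ → ℝ) h1
    push_cast at this
    linarith [this]
  have h2' : ((2*m+1).choose k : ℝ) * ((2*(m:ℝ)+1) - k) = (2*(m:ℝ)+1) * ((2*m).choose k : ℝ) := by
    have := congrArg (Nat.cast : ℕ → ℝ) h2
    push_cast [Nat.cast_sub hk] at this
    linarith [this]
  have hrw : ((2*(m:ℝ)+2) - k) = ((2*(m:ℝ)+1) - k) + 1 := by ring
  rw [hrw, ← h1']
  nlinarith [h1', h2']

lemma sym_zero (m n : ℕ) :
    ∑ k ∈ range (2*m+2), (-1:ℝ)^k * ((2*m+1).choose k : ℝ) *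
      (((m:ℝ)-k) * ((m:ℝ)-k+1))^n = 0 := by
  set f : ℕ → ℝ := fun k => (-1:ℝ)^k * ((2*m+1).choose k : ℝ) *
      (((m:ℝ)-k) * ((m:ℝ)-k+1))^n with hf
  have hrefl := Finset.sum_range_reflect f (2*m+2)
  have hneg : ∀ k ∈ range (2*m+2), f (2*m+2-1-k) = - f k := by
    intro k hk
    have hk' : k ≤ 2*m+1 := by have := mem_range.mp hk; omega
    have he : 2*m+2-1-k = 2*m+1-k := by omega
    rw [he, hf]
    simp only
    have hc : (2*m+1).choose (2*m+1-k) = (2*m+1).choose k := Nat.choose_symm hk'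
    have hcast : ((2*m+1-k : ℕ) : ℝ) = (2*(m:ℝ)+1) - k := by
      push_cast [Nat.cast_sub hk']; ring
    have hsign : (-1:ℝ)^(2*m+1-k) = - (-1:ℝ)^k := by
      have hadd : (2*m+1-k) + k = 2*m+1 := by omega
      have h5 : (-1:ℝ)^((2*m+1-k)+k) = (-1:ℝ)^(2*m+1) := by rw [hadd]
      rw [pow_add] at h5
      have hk2 : (-1:ℝ)^k * (-1:ℝ)^k = 1 := by
        rw [← pow_add]
        exact (Even.neg_one_pow ⟨k, rfl⟩)
      have hodd : (-1:ℝ)^(2*m+1) = -1 := Odd.neg_one_pow ⟨m, by ring⟩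
      calc (-1:ℝ)^(2*m+1-k) = (-1:ℝ)^(2*m+1-k) * ((-1:ℝ)^k * (-1:ℝ)^k) := by
            rw [hk2, mul_one]
        _ = ((-1:ℝ)^(2*m+1-k) * (-1:ℝ)^k) * (-1:ℝ)^k := by ring
        _ = - (-1:ℝ)^k := by rw [h5, hodd]; ring
    rw [hc, hcast, hsign]
    ring
  rw [Finset.sum_congr rfl hneg, Finset.sum_neg_distrib] at hrefl
  linarith

lemma key (n j : ℕ) :
    (Nat.factorial (2*j) : ℝ) * LS n j =
      ∑ ν ∈ range (2*j+1), (-1:ℝ)^ν * ((2*j).choose ν : ℝ) *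
        (((j:ℝ) - ν) * ((j:ℝ) - ν + 1))^n := by
  induction n generalizing j with
  | zero =>
    cases j with
    | zero => simp [LS]
    | succ m =>
      simp only [pow_zero, mul_one, LS]
      rw [mul_zero]
      exact (alt_sum (2*(m+1)) (by omega)).symm
  | succ n ih =>
    cases j with
    | zero =>
      simp [LS]
    | succ m =>
      have h22 : 2*(m+1) = 2*m+2 := by ring
      have ih1 := ih m
      have ih2 := ih (m+1)
      rw [h22] at ih2 ⊢
      push_cast at ih2 ⊢
      have hLS : LS (n+1) (m+1) = LS n m + ((m:ℝ)+1)*((m:ℝ)+2) * LS n (m+1) := rfl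
      have hfact : ((2*m+2).factorial : ℝ)
          = (2*(m:ℝ)+2) * (2*(m:ℝ)+1) * ((2*m).factorial : ℝ) := by
        have h6 : 2*m+2 = (2*m+1)+1 := by omega
        rw [h6, Nat.factorial_succ, Nat.factorial_succ]
        push_cast; ring
      rw [hfact] at ih2
      set F : ℕ → ℝ := fun ν => (-1:ℝ)^ν * ((2*m+2).choose ν : ℝ) *
          ((((m:ℝ)+1 - ν) * ((m:ℝ)+1 - ν + 1)) - ((m:ℝ)+1)*((m:ℝ)+2)) *
          (((m:ℝ)+1 - ν) * ((m:ℝ)+1 - ν + 1))^n with hF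
      have step1 : ∑ ν ∈ range (2*m+2+1), (-1:ℝ)^ν * ((2*m+2).choose ν : ℝ) *
            (((m:ℝ)+1 - ν) * ((m:ℝ)+1 - ν + 1))^(n+1)
          - ((m:ℝ)+1)*((m:ℝ)+2) * ∑ ν ∈ range (2*m+2+1), (-1:ℝ)^ν * ((2*m+2).choose ν : ℝ) *
            (((m:ℝ)+1 - ν) * ((m:ℝ)+1 - ν + 1))^n
          = ∑ ν ∈ range (2*m+2+1), F ν := by
        rw [mul_sum, ← Finset.sum_sub_distrib]
        refine sum_congr rfl fun ν hν => ?_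
        rw [hF]; ring
      have step2 : ∑ ν ∈ range (2*m+2+1), F ν = (∑ k ∈ range (2*m+2), F (k+1)) + F 0 :=
        Finset.sum_range_succ' F (2*m+2)
      have hF0 : F 0 = 0 := by rw [hF]; push_cast; ring
      have step3 : ∀ k ∈ range (2*m+2), F (k+1)
          = (2*(m:ℝ)+2)*(2*(m:ℝ)+1) * ((-1:ℝ)^k * ((2*m).choose k : ℝ) *
              (((m:ℝ)-k) * ((m:ℝ)-k+1))^n)
            + (2*(m:ℝ)+2) * ((-1:ℝ)^k * ((2*m+1).choose k : ℝ) *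
              (((m:ℝ)-k) * ((m:ℝ)-k+1))^n) := by
        intro k hk
        have hk' : k ≤ 2*m+1 := by have := mem_range.mp hk; omega
        have hco := coeff_id m k hk'
        rw [hF]
        simp only
        push_cast
        linear_combination ((-1:ℝ)^k * (((m:ℝ)-k) * ((m:ℝ)-k+1))^n) * hco
      have hA : ∑ k ∈ range (2*m+2), F (k+1)
          = (2*(m:ℝ)+2)*(2*(m:ℝ)+1) * ∑ k ∈ range (2*m+2), ((-1:ℝ)^k * ((2*m).choose k : ℝ) *
              (((m:ℝ)-k) * ((m:ℝ)-k+1))^n)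
            + (2*(m:ℝ)+2) * ∑ k ∈ range (2*m+2), ((-1:ℝ)^k * ((2*m+1).choose k : ℝ) *
              (((m:ℝ)-k) * ((m:ℝ)-k+1))^n) := by
        rw [Finset.sum_congr rfl step3, Finset.sum_add_distrib, ← Finset.mul_sum,
          ← Finset.mul_sum]
      have hzero : ∑ k ∈ range (2*m+2), (-1:ℝ)^k * ((2*m+1).choose k : ℝ) *
          (((m:ℝ)-k) * ((m:ℝ)-k+1))^n = 0 := sym_zero m n
      have step4 : ∑ k ∈ range (2*m+2), ((-1:ℝ)^k * ((2*m).choose k : ℝ) *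
            (((m:ℝ)-k) * ((m:ℝ)-k+1))^n)
          = ∑ ν ∈ range (2*m+1), (-1:ℝ)^ν * ((2*m).choose ν : ℝ) *
            (((m:ℝ)-ν) * ((m:ℝ)-ν+1))^n := by
        rw [Finset.sum_range_succ, Nat.choose_eq_zero_of_lt (by omega)]
        norm_num
      rw [hzero, mul_zero, add_zero, step4] at hA
      rw [hLS]
      rw [hfact]
      linear_combination (2*(m:ℝ)+2)*(2*(m:ℝ)+1)*ih1 + ((m:ℝ)+1)*((m:ℝ)+2)*ih2
        - step1 - step2 - hA - hF0

theorem ls_double_sum (n j : ℕ) :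
    (Nat.factorial (2 * j) : ℝ) * LS n j =
      ∑ μ ∈ Finset.range (n + 1), (Nat.choose n μ : ℝ) *
        ∑ ν ∈ Finset.range (2 * j + 1),
          (-1 : ℝ) ^ ν * (Nat.choose (2 * j) ν) * ((j : ℝ) - ν) ^ (n + μ) := by
  rw [key n j]
  simp_rw [Finset.mul_sum]
  rw [Finset.sum_comm]
  refine Finset.sum_congr rfl fun ν hν => ?_
  rw [← binom_aux ((j:ℝ) - ν) n, Finset.mul_sum]
  exact Finset.sum_congr rfl fun μ _ => by ring
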